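/- Let ρ and ρ' be Riesz seminorms on vector lattices X and Y, respectively. Let T : X → Y be a positive linear operator that is pseudo-semicompact: for every B ⊆ X with sup_{x∈B} ρ(x) < ∞, the image T(B) is almost pseudo-bounded in Y with respect to ρ'. If S : X → Y is a linear operator with 0 ≤ S x ≤ T x for all x ∈ X⁺, then S is pseudo-semicompact: for every B ⊆ X with sup_{x∈B} ρ(x) < ∞, the image S(B) is almost pseudo-bounded in Y with respect to ρ'. -/

import Mathlib

open Filter Topology Pointwise

/-- An operator dominated by a positive pseudo-semicompact operator (between
vector lattices with Riesz seminorms) is pseudo-semicompact. -/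
theorem stmt_18 {X : Type*} [Lattice X] [AddCommGroup X] [Module ℝ X]
    [CovariantClass X X (· + ·) (· ≤ ·)] [PosSMulMono ℝ X]
    {Y : Type*} [Lattice Y] [AddCommGroup Y] [Module ℝ Y]
    [CovariantClass Y Y (· + ·) (· ≤ ·)] [PosSMulMono ℝ Y]
    (ρ : X → ℝ)
    (hhom : ∀ (c : ℝ) (x : X), ρ (c • x) = |c| * ρ x)
    (hsub : ∀ x y : X, ρ (x + y) ≤ ρ x + ρ y)
    (hmono : ∀ x y : X, |x| ≤ |y| → ρ x ≤ ρ y)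
    (ρ' : Y → ℝ)
    (h'hom : ∀ (c : ℝ) (y : Y), ρ' (c • y) = |c| * ρ' y)
    (h'sub : ∀ y z : Y, ρ' (y + z) ≤ ρ' y + ρ' z)
    (h'mono : ∀ y z : Y, |y| ≤ |z| → ρ' y ≤ ρ' z)
    (T : X →ₗ[ℝ] Y) (hTpos : ∀ x : X, 0 ≤ x → 0 ≤ T x)
    (hTsc : ∀ B : Set X, (∃ M : ℝ, ∀ x ∈ B, ρ x ≤ M) →
      ∀ ε : ℝ, 0 < ε → ∃ a b : Y, a ≤ b ∧
        (T : X → Y) '' B ⊆ Set.Icc a b + ε • {y : Y | ρ' y ≤ 1})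
    (S : X →ₗ[ℝ] Y) (hST : ∀ x : X, 0 ≤ x → 0 ≤ S x ∧ S x ≤ T x) :
    ∀ B : Set X, (∃ M : ℝ, ∀ x ∈ B, ρ x ≤ M) →
      ∀ ε : ℝ, 0 < ε → ∃ a b : Y, a ≤ b ∧
        (S : X → Y) '' B ⊆ Set.Icc a b + ε • {y : Y | ρ' y ≤ 1} := by
  intro B ⟨M, hM⟩ ε hε
  -- ρ' is nonnegative
  have hρ'0 : ρ' 0 = 0 := by simpa using h'hom 0 0
  have hρ'neg : ∀ v : Y, ρ' (-v) = ρ' v := by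
    intro v; have := h'hom (-1) v; simpa using this
  have hρ'nonneg : ∀ v : Y, 0 ≤ ρ' v := by
    intro v
    have h := h'sub v (-v)
    simp [hρ'0, hρ'neg] at h
    linarith
  -- the set of positive/negative parts
  set B' : Set X := {z | ∃ x ∈ B, z = x ⊔ 0 ∨ z = (-x) ⊔ 0} with hB'
  have hB'bd : ∃ M' : ℝ, ∀ z ∈ B', ρ z ≤ M' := by
    refine ⟨M, ?_⟩
    rintro z ⟨x, hx, hz⟩
    have key : ∀ w : X, |w| = |x| → ρ (w ⊔ 0) ≤ M := by
      intro w hw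
      have h1 : (0:X) ≤ w ⊔ 0 := le_sup_right
      have h2 : |w ⊔ 0| = w ⊔ 0 := abs_of_nonneg h1
      have h3 : w ⊔ 0 ≤ |w| := sup_le (le_abs_self w) (abs_nonneg w)
      have := hmono (w ⊔ 0) x (by rw [h2, ← hw]; exact h3)
      exact this.trans (hM x hx)
    rcases hz with hz | hz
    · rw [hz]; exact key x rfl
    · rw [hz]; exact key (-x) (abs_neg x)
  obtain ⟨a, b, hab, hTB⟩ := hTsc B' hB'bd (ε/2) (by linarith)
  refine ⟨-(b ⊔ 0), b ⊔ 0, by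
    have h0 : (0:Y) ≤ b ⊔ 0 := le_sup_right
    calc -(b ⊔ 0) ≤ 0 := neg_nonpos.2 h0
      _ ≤ b ⊔ 0 := h0, ?_⟩
  rintro _ ⟨x, hx, rfl⟩
  -- key decomposition for nonneg elements belonging to B'
  have key : ∀ z : X, 0 ≤ z → z ∈ B' →
      ∃ p v : Y, S z = p + v ∧ 0 ≤ p ∧ p ≤ b ⊔ 0 ∧ ρ' v ≤ ε/2 := by
    intro z hz hzB'
    obtain ⟨hS0, hSle⟩ := hST z hz
    have hTz : T z ∈ Set.Icc a b + (ε/2) • {y : Y | ρ' y ≤ 1} :=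
      hTB ⟨z, hzB', rfl⟩
    rw [Set.mem_add] at hTz
    obtain ⟨c, hc, u, hu, hcu⟩ := hTz
    obtain ⟨w, hw, rfl⟩ := hu
    have hw' : ρ' w ≤ 1 := hw
    have hcu' : c + (ε/2) • w = T z := hcu
    have hρ'u : ρ' ((ε/2) • w) ≤ ε/2 := by
      rw [h'hom]
      have habs : |ε/2| = ε/2 := abs_of_pos (by linarith)
      rw [habs]
      nlinarith [hρ'nonneg w]
    set t := b ⊔ 0 with ht
    refine ⟨S z ⊓ t, (S z - t) ⊔ 0, ?_, le_inf hS0 le_sup_right,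
      inf_le_right, ?_⟩
    · have h1 : (S z - t) ⊔ 0 = S z ⊔ t - t := by
        have h := sup_eq_add_posPart_sub (S z) t
        rw [posPart_def] at h
        rw [h]; abel
      rw [h1, ← add_sub_assoc, inf_add_sup, add_sub_cancel_right]
    · have hle : S z - t ≤ (ε/2) • w := by
        have h1 : S z ≤ c + (ε/2) • w := by rw [hcu']; exact hSle
        have hcb : c ≤ t := hc.2.trans le_sup_left
        calc S z - t ≤ c + (ε/2) • w - t := sub_le_sub_right h1 _
          _ ≤ t + (ε/2) • w - t := sub_le_sub_right (add_le_add_left hcb _) _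
          _ = (ε/2) • w := by abel
      have hle2 : (S z - t) ⊔ 0 ≤ (ε/2) • w ⊔ 0 := sup_le_sup_right hle 0
      have habs : |(S z - t) ⊔ 0| ≤ |(ε/2) • w| := by
        rw [abs_of_nonneg (le_sup_right : (0:Y) ≤ _)]
        exact hle2.trans (sup_le (le_abs_self _) (abs_nonneg _))
      exact (h'mono _ _ habs).trans hρ'u
  have hx1 : x ⊔ 0 ∈ B' := ⟨x, hx, Or.inl rfl⟩
  have hx2 : (-x) ⊔ 0 ∈ B' := ⟨x, hx, Or.inr rfl⟩
  obtain ⟨p₁, v₁, he₁, hp₁0, hp₁b, hv₁⟩ := key (x ⊔ 0) le_sup_right hx1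
  obtain ⟨p₂, v₂, he₂, hp₂0, hp₂b, hv₂⟩ := key ((-x) ⊔ 0) le_sup_right hx2
  have hdecomp : x = (x ⊔ 0) - ((-x) ⊔ 0) := by
    have h := posPart_sub_negPart x
    rw [posPart_def, negPart_def] at h
    exact h.symm
  have hSx : S x = (p₁ - p₂) + (v₁ - v₂) := by
    have h : S x = S (x ⊔ 0) - S ((-x) ⊔ 0) := by
      conv_lhs => rw [hdecomp]
      rw [map_sub]
    rw [h, he₁, he₂]; abel
  rw [Set.mem_add]
  refine ⟨p₁ - p₂, ⟨?_, ?_⟩, v₁ - v₂, ?_, hSx.symm⟩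
  · have h' : p₂ - p₁ ≤ b ⊔ 0 := by simpa using sub_le_sub hp₂b hp₁0
    simpa using neg_le_neg_iff.2 h'
  · simpa using sub_le_sub hp₁b hp₂0
  · refine ⟨ε⁻¹ • (v₁ - v₂), ?_, ?_⟩
    · show ρ' _ ≤ 1
      rw [h'hom, abs_of_pos (inv_pos.mpr hε)]
      have hsv : ρ' (v₁ - v₂) ≤ ε := by
        have h := h'sub v₁ (-v₂)
        rw [hρ'neg] at h
        have h2 : ρ' (v₁ - v₂) ≤ ρ' v₁ + ρ' v₂ := by
          simpa [sub_eq_add_neg] using h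
        linarith
      rw [inv_mul_le_iff₀ hε, mul_one]
      exact hsv
    · show ε • (ε⁻¹ • (v₁ - v₂)) = v₁ - v₂
      rw [smul_inv_smul₀ (ne_of_gt hε)]
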